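/- Let n ≥ 1 and 0 ≤ s < t ≤ n, and suppose both α = (i_0,…,i_n) and α' = (i_0,…,i_s+1,…,i_t−1,…,i_n) (the tuple obtained from α by replacing i_s with i_s+1 and i_t with i_t−1) belong to ω_n. Then for every array a of weight α' and every array b of weight α, deg(a) − deg(b) = i_t − i_s − 1, where deg denotes the number of neighbors in G_n. Consequently, if (i_0,…,i_n) ∈ ω_n with i_0 ≤ i_1 ≤ ⋯ ≤ i_n, then every array of weight (i_0,…,i_n) has exactly Σ_{k=0}^{n} m_k + Σ_{k : i_k < k} (k − i_k) neighbors in G_n, where m_k = i_k + (i_k+1) + ⋯ + (k−1) if i_k < k, m_k = −(i_k + (i_k−1) + ⋯ + (k+1)) if i_k > k, and m_k = 0 if i_k = k. -/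

import Mathlib

/-- `UT n`: strictly upper triangular 0-1 arrays `(a_{i,j})_{0 ≤ i < j ≤ n}`,
encoded as functions on `Fin (n+1) × Fin (n+1)` vanishing off the region `i < j`. -/
def UT (n : ℕ) : Type :=
  {a : Fin (n + 1) → Fin (n + 1) → ℤ //
    ∀ i j : Fin (n + 1), (i < j → a i j = 0 ∨ a i j = 1) ∧ (¬ i < j → a i j = 0)}

/-- Adjacency in `G_n`: `a` and `b` differ exactly on a triple of positions
`(i,j), (j,l), (i,l)` with `i < j < l`, where one of them has entries `1, 1, 0` and
the other `0, 0, 1`. -/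
def UTAdj {n : ℕ} (a b : UT n) : Prop :=
  ∃ i j l : Fin (n + 1), i < j ∧ j < l ∧
    ((a.1 i j = 1 ∧ a.1 j l = 1 ∧ a.1 i l = 0 ∧
        b.1 i j = 0 ∧ b.1 j l = 0 ∧ b.1 i l = 1) ∨
      (b.1 i j = 1 ∧ b.1 j l = 1 ∧ b.1 i l = 0 ∧
        a.1 i j = 0 ∧ a.1 j l = 0 ∧ a.1 i l = 1)) ∧
    ∀ s t : Fin (n + 1),
      ¬ ((s = i ∧ t = j) ∨ (s = j ∧ t = l) ∨ (s = i ∧ t = l)) → a.1 s t = b.1 s t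

/-- The weight of an array: `w_s(a) = ∑_{k<s} (1 - a_{k,s}) + ∑_{k>s} a_{s,k}`. -/
def UTweight {n : ℕ} (a : UT n) : Fin (n + 1) → ℤ := fun s =>
  (∑ k : Fin (n + 1), if k < s then 1 - a.1 k s else 0) +
    ∑ k : Fin (n + 1), if s < k then a.1 s k else 0

/-- Membership in `ω_n`: the tuple sums to `0 + 1 + ⋯ + n` and every subset of the
entries sums to at least `0 + 1 + ⋯ + (s-1)` where `s` is the size of the subset. -/
def InOmega {n : ℕ} (c : Fin (n + 1) → ℤ) : Prop :=
  (∑ k : Fin (n + 1), c k = ∑ k : Fin (n + 1), (k : ℤ)) ∧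
    ∀ s : Finset (Fin (n + 1)), (∑ t ∈ Finset.range s.card, (t : ℤ)) ≤ ∑ k ∈ s, c k

/-- The summand `m_k` in the degree formula: `m_k = i_k + (i_k+1) + ⋯ + (k-1)` if
`i_k < k`, `m_k = -(i_k + (i_k-1) + ⋯ + (k+1))` if `i_k > k`, and `0` if `i_k = k`. -/
noncomputable def mval {n : ℕ} (α : Fin (n + 1) → ℤ) (k : Fin (n + 1)) : ℤ :=
  if α k < (k : ℤ) then ∑ t ∈ Finset.Icc (α k) ((k : ℤ) - 1), t
  else if (k : ℤ) < α k then -∑ t ∈ Finset.Icc ((k : ℤ) + 1) (α k), t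
  else 0

namespace DegAux

variable {n : ℕ}

/-- the finset of cyclic triples of `a` -/
def Cyc (a : UT n) : Finset (Fin (n+1) × Fin (n+1) × Fin (n+1)) :=
  Finset.univ.filter (fun p => p.1 < p.2.1 ∧ p.2.1 < p.2.2 ∧
    ((a.1 p.1 p.2.1 = 1 ∧ a.1 p.2.1 p.2.2 = 1 ∧ a.1 p.1 p.2.2 = 0) ∨
     (a.1 p.1 p.2.1 = 0 ∧ a.1 p.2.1 p.2.2 = 0 ∧ a.1 p.1 p.2.2 = 1)))

/-- flip the three entries at positions (i,j),(j,l),(i,l) -/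
def flipfun (a : UT n) (i j l : Fin (n+1)) : Fin (n+1) → Fin (n+1) → ℤ := fun s t =>
  if s = i ∧ t = j then 1 - a.1 i j else
  if s = j ∧ t = l then 1 - a.1 j l else
  if s = i ∧ t = l then 1 - a.1 i l else a.1 s t

lemma flip_mem (a : UT n) (i j l : Fin (n+1)) (hij : i < j) (hjl : j < l) :
    ∀ s t : Fin (n + 1), (s < t → flipfun a i j l s t = 0 ∨ flipfun a i j l s t = 1) ∧
      (¬ s < t → flipfun a i j l s t = 0) := by
  intro s t
  unfold flipfun
  constructor
  · intro _
    rcases (a.2 i j).1 hij with h | h <;> rcases (a.2 j l).1 hjl with h2 | h2 <;>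
      rcases (a.2 i l).1 (hij.trans hjl) with h3 | h3 <;> split_ifs <;>
      simp_all <;> exact (a.2 s t).1 ‹s < t›
  · intro hst
    have h1 : ¬ (s = i ∧ t = j) := by rintro ⟨rfl, rfl⟩; exact hst hij
    have h2 : ¬ (s = j ∧ t = l) := by rintro ⟨rfl, rfl⟩; exact hst hjl
    have h3 : ¬ (s = i ∧ t = l) := by rintro ⟨rfl, rfl⟩; exact hst (hij.trans hjl)
    simp only [h1, h2, h3, if_false]
    exact (a.2 s t).2 hst

/-- the flipped array as an element of `UT n` -/
def flip (a : UT n) (i j l : Fin (n+1)) (hij : i < j) (hjl : j < l) : UT n :=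
  ⟨flipfun a i j l, flip_mem a i j l hij hjl⟩

lemma triple_eq {i j l i' j' l' : ℕ} (h1 : i < j) (h2 : j < l) (h3 : i' < j') (h4 : j' < l')
    (m1 : (i,j) = (i',j') ∨ (i,j) = (j',l') ∨ (i,j) = (i',l'))
    (m2 : (j,l) = (i',j') ∨ (j,l) = (j',l') ∨ (j,l) = (i',l'))
    (m3 : (i,l) = (i',j') ∨ (i,l) = (j',l') ∨ (i,l) = (i',l')) :
    i = i' ∧ j = j' ∧ l = l' := by
  simp only [Prod.mk.injEq] at m1 m2 m3
  omega

end DegAux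


namespace DegAux
variable {n : ℕ}

lemma flip_ij (a : UT n) (i j l : Fin (n+1)) : flipfun a i j l i j = 1 - a.1 i j := by
  simp [flipfun]

lemma flip_jl (a : UT n) (i j l : Fin (n+1)) (hij : i < j) :
    flipfun a i j l j l = 1 - a.1 j l := by
  have h : j ≠ i := ne_of_gt hij
  simp [flipfun, h]

lemma flip_il (a : UT n) (i j l : Fin (n+1)) (hij : i < j) (hjl : j < l) :
    flipfun a i j l i l = 1 - a.1 i l := by
  have h1 : l ≠ j := ne_of_gt hjl
  have h2 : i ≠ j := ne_of_lt hij
  simp [flipfun, h1, h2]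

lemma flip_other (a : UT n) (i j l s t : Fin (n+1))
    (h : ¬ ((s = i ∧ t = j) ∨ (s = j ∧ t = l) ∨ (s = i ∧ t = l))) :
    flipfun a i j l s t = a.1 s t := by
  push_neg at h
  simp only [flipfun]
  rw [if_neg, if_neg, if_neg]
  · rintro ⟨rfl, rfl⟩; exact (h.2.2 rfl) rfl
  · rintro ⟨rfl, rfl⟩; exact (h.2.1 rfl) rfl
  · rintro ⟨rfl, rfl⟩; exact (h.1 rfl) rfl

lemma mem_of_ne (a : UT n) (i j l s t : Fin (n+1))
    (hval : flipfun a i j l s t ≠ a.1 s t) :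
    (s = i ∧ t = j) ∨ (s = j ∧ t = l) ∨ (s = i ∧ t = l) := by
  by_contra h
  exact hval (flip_other a i j l s t h)

lemma mem_Cyc_iff (a : UT n) (p : Fin (n+1) × Fin (n+1) × Fin (n+1)) :
    p ∈ Cyc a ↔ p.1 < p.2.1 ∧ p.2.1 < p.2.2 ∧
      ((a.1 p.1 p.2.1 = 1 ∧ a.1 p.2.1 p.2.2 = 1 ∧ a.1 p.1 p.2.2 = 0) ∨
       (a.1 p.1 p.2.1 = 0 ∧ a.1 p.2.1 p.2.2 = 0 ∧ a.1 p.1 p.2.2 = 1)) := by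
  simp [Cyc]

lemma adj_flip (a : UT n) (i j l : Fin (n+1)) (hij : i < j) (hjl : j < l)
    (hpat : (a.1 i j = 1 ∧ a.1 j l = 1 ∧ a.1 i l = 0) ∨
      (a.1 i j = 0 ∧ a.1 j l = 0 ∧ a.1 i l = 1)) :
    UTAdj a (flip a i j l hij hjl) := by
  refine ⟨i, j, l, hij, hjl, ?_, fun s t hst => (flip_other a i j l s t hst).symm⟩
  have e1 := flip_ij a i j l
  have e2 := flip_jl a i j l hij
  have e3 := flip_il a i j l hij hjl
  rcases hpat with ⟨h1, h2, h3⟩ | ⟨h1, h2, h3⟩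
  · left
    refine ⟨h1, h2, h3, ?_, ?_, ?_⟩ <;> show flipfun a i j l _ _ = _ <;> omega
  · right
    refine ⟨?_, ?_, ?_, h1, h2, h3⟩ <;> show flipfun a i j l _ _ = _ <;> omega


def fmap (a : UT n) (p : {p // p ∈ Cyc a}) : {c : UT n // UTAdj a c} :=
  ⟨flip a p.1.1 p.1.2.1 p.1.2.2 ((mem_Cyc_iff a p.1).1 p.2).1
      ((mem_Cyc_iff a p.1).1 p.2).2.1,
    adj_flip a _ _ _ _ _ ((mem_Cyc_iff a p.1).1 p.2).2.2⟩


lemma fmap_inj (a : UT n) : Function.Injective (fmap a) := by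
  rintro ⟨⟨i, j, l⟩, hp⟩ ⟨⟨i', j', l'⟩, hp'⟩ heq
  have hp2 := (mem_Cyc_iff a _).1 hp
  have hp2' := (mem_Cyc_iff a _).1 hp'
  obtain ⟨hij, hjl, hpat⟩ := hp2
  obtain ⟨hij', hjl', hpat'⟩ := hp2'
  have hfun : flipfun a i j l = flipfun a i' j' l' :=
    congrArg Subtype.val (congrArg Subtype.val heq)
  have key : ∀ s t : Fin (n+1), flipfun a i j l s t ≠ a.1 s t →
      (s = i' ∧ t = j') ∨ (s = j' ∧ t = l') ∨ (s = i' ∧ t = l') := by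
    intro s t h
    exact mem_of_ne a i' j' l' s t (hfun ▸ h)
  have ne1 : flipfun a i j l i j ≠ a.1 i j := by
    rw [flip_ij]; rcases (a.2 i j).1 hij with h | h <;> rw [h] <;> norm_num
  have ne2 : flipfun a i j l j l ≠ a.1 j l := by
    rw [flip_jl a i j l hij]; rcases (a.2 j l).1 hjl with h | h <;> rw [h] <;> norm_num
  have M1 : ((i:ℕ) = i' ∧ (j:ℕ) = j') ∨ ((i:ℕ) = j' ∧ (j:ℕ) = l') ∨
      ((i:ℕ) = i' ∧ (j:ℕ) = l') := by
    rcases key i j ne1 with ⟨e1, e2⟩ | ⟨e1, e2⟩ | ⟨e1, e2⟩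
    · exact Or.inl ⟨congrArg Fin.val e1, congrArg Fin.val e2⟩
    · exact Or.inr (Or.inl ⟨congrArg Fin.val e1, congrArg Fin.val e2⟩)
    · exact Or.inr (Or.inr ⟨congrArg Fin.val e1, congrArg Fin.val e2⟩)
  have M2 : ((j:ℕ) = i' ∧ (l:ℕ) = j') ∨ ((j:ℕ) = j' ∧ (l:ℕ) = l') ∨
      ((j:ℕ) = i' ∧ (l:ℕ) = l') := by
    rcases key j l ne2 with ⟨e1, e2⟩ | ⟨e1, e2⟩ | ⟨e1, e2⟩
    · exact Or.inl ⟨congrArg Fin.val e1, congrArg Fin.val e2⟩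
    · exact Or.inr (Or.inl ⟨congrArg Fin.val e1, congrArg Fin.val e2⟩)
    · exact Or.inr (Or.inr ⟨congrArg Fin.val e1, congrArg Fin.val e2⟩)
  have o1 : (i:ℕ) < j := hij
  have o2 : (j:ℕ) < l := hjl
  have o3 : (i':ℕ) < j' := hij'
  have o4 : (j':ℕ) < l' := hjl'
  have e : (i:ℕ) = i' ∧ (j:ℕ) = j' ∧ (l:ℕ) = l' := by omega
  simp only [Subtype.mk.injEq, Prod.mk.injEq]
  exact ⟨Fin.ext e.1, Fin.ext e.2.1, Fin.ext e.2.2⟩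

lemma fmap_surj (a : UT n) : Function.Surjective (fmap a) := by
  rintro ⟨c, hadj⟩
  obtain ⟨i, j, l, hij, hjl, hpat, hagree⟩ := hadj
  have hmem : ((i, j, l) : Fin (n+1) × Fin (n+1) × Fin (n+1)) ∈ Cyc a := by
    rw [mem_Cyc_iff]
    refine ⟨hij, hjl, ?_⟩
    rcases hpat with ⟨h1, h2, h3, _⟩ | ⟨_, _, _, h1, h2, h3⟩
    · exact Or.inl ⟨h1, h2, h3⟩
    · exact Or.inr ⟨h1, h2, h3⟩
  refine ⟨⟨(i, j, l), hmem⟩, ?_⟩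
  refine Subtype.ext (Subtype.ext (funext fun s => funext fun t => ?_))
  show flipfun a i j l s t = c.1 s t
  by_cases hc : (s = i ∧ t = j) ∨ (s = j ∧ t = l) ∨ (s = i ∧ t = l)
  · have e1 := flip_ij a i j l
    have e2 := flip_jl a i j l hij
    have e3 := flip_il a i j l hij hjl
    obtain ⟨e4, e5⟩ | ⟨e4, e5⟩ | ⟨e4, e5⟩ := hc <;> rw [e4, e5] <;>
      rcases hpat with ⟨h1, h2, h3, h4, h5, h6⟩ | ⟨h1, h2, h3, h4, h5, h6⟩ <;> omega
  · rw [flip_other a i j l s t hc]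
    exact hagree s t hc

lemma card_neighbors (a : UT n) :
    Nat.card {c : UT n // UTAdj a c} = (Cyc a).card := by
  classical
  rw [← Nat.card_congr (Equiv.ofBijective (fmap a) ⟨fmap_inj a, fmap_surj a⟩)]
  simp [Nat.card_eq_fintype_card]



/-- `Beats a v k`: vertex `v` beats `k` in the tournament encoded by `a`. -/
def Beats (a : UT n) (v k : Fin (n+1)) : Prop :=
  (v < k ∧ a.1 v k = 1) ∨ (k < v ∧ a.1 k v = 0)

instance (a : UT n) (v k : Fin (n+1)) : Decidable (Beats a v k) := by
  unfold Beats; infer_instance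

/-- out-degree of `v` -/
def odeg (a : UT n) (v : Fin (n+1)) : ℕ :=
  (Finset.univ.filter (Beats a v)).card

lemma weight_eq (a : UT n) (v : Fin (n+1)) : UTweight a v = (odeg a v : ℤ) := by
  unfold UTweight odeg
  rw [← Finset.sum_add_distrib, ← Finset.sum_boole]
  apply Finset.sum_congr rfl
  intro k _
  rcases lt_trichotomy k v with h | h | h
  · have hnv : ¬ v < k := asymm h
    rcases (a.2 k v).1 h with h0 | h0 <;> simp [Beats, h, hnv, h0]
  · subst h
    simp [Beats]
  · have hnk : ¬ k < v := asymm h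
    rcases (a.2 v k).1 h with h0 | h0 <;> simp [Beats, h, hnk, h0]

/-- all increasing triples -/
def TT : Finset (Fin (n+1) × Fin (n+1) × Fin (n+1)) :=
  Finset.univ.filter (fun p => p.1 < p.2.1 ∧ p.2.1 < p.2.2)

/-- pairs dominated by a common vertex -/
def PP (a : UT n) : Finset (Fin (n+1) × Fin (n+1) × Fin (n+1)) :=
  Finset.univ.filter (fun q => q.2.1 < q.2.2 ∧ Beats a q.1 q.2.1 ∧ Beats a q.1 q.2.2)

lemma mem_PP_iff (a : UT n) (q : Fin (n+1) × Fin (n+1) × Fin (n+1)) :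
    q ∈ PP a ↔ q.2.1 < q.2.2 ∧ Beats a q.1 q.2.1 ∧ Beats a q.1 q.2.2 := by
  simp [PP]

lemma mem_TT_iff (p : Fin (n+1) × Fin (n+1) × Fin (n+1)) :
    p ∈ TT (n := n) ↔ p.1 < p.2.1 ∧ p.2.1 < p.2.2 := by
  simp [TT]

lemma card_TT_sdiff (a : UT n) : (TT \ Cyc a).card = (PP a).card := by
  classical
  apply Finset.card_bij'
    (i := fun p _ =>
      if a.1 p.1 p.2.1 = 1 ∧ a.1 p.1 p.2.2 = 1 then p
      else if a.1 p.1 p.2.1 = 0 ∧ a.1 p.2.1 p.2.2 = 1 then (p.2.1, p.1, p.2.2)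
      else (p.2.2, p.1, p.2.1))
    (j := fun q _ =>
      if q.1 < q.2.1 then q
      else if q.1 < q.2.2 then (q.2.1, q.1, q.2.2)
      else (q.2.1, q.2.2, q.1))
  · -- hi
    rintro ⟨i, j, l⟩ hp
    rw [Finset.mem_sdiff, mem_TT_iff, mem_Cyc_iff] at hp
    obtain ⟨⟨hij, hjl⟩, hnc⟩ := hp
    simp only at hij hjl hnc ⊢
    have hnc' : ¬ ((a.1 i j = 1 ∧ a.1 j l = 1 ∧ a.1 i l = 0) ∨
        (a.1 i j = 0 ∧ a.1 j l = 0 ∧ a.1 i l = 1)) := fun h => hnc ⟨hij, hjl, h⟩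
    by_cases c1 : a.1 i j = 1 ∧ a.1 i l = 1
    · rw [if_pos c1, mem_PP_iff]
      exact ⟨hjl, Or.inl ⟨hij, c1.1⟩, Or.inl ⟨hij.trans hjl, c1.2⟩⟩
    · by_cases c2 : a.1 i j = 0 ∧ a.1 j l = 1
      · rw [if_neg c1, if_pos c2, mem_PP_iff]
        exact ⟨hij.trans hjl, Or.inr ⟨hij, c2.1⟩, Or.inl ⟨hjl, c2.2⟩⟩
      · have e1 := (a.2 i j).1 hij
        have e2 := (a.2 j l).1 hjl
        have e3 := (a.2 i l).1 (hij.trans hjl)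
        have key : a.1 j l = 0 ∧ a.1 i l = 0 := by omega
        rw [if_neg c1, if_neg c2, mem_PP_iff]
        exact ⟨hij, Or.inr ⟨hij.trans hjl, key.2⟩, Or.inr ⟨hjl, key.1⟩⟩
  · -- hj
    rintro ⟨v, x, y⟩ hq
    rw [mem_PP_iff] at hq
    obtain ⟨hxy, hb1, hb2⟩ := hq
    simp only at hxy hb1 hb2 ⊢
    rw [Finset.mem_sdiff, mem_TT_iff, mem_Cyc_iff]
    by_cases h1 : v < x
    · obtain ⟨h1', e1⟩ | ⟨hc, e1⟩ := hb1
      swap; · exact absurd (h1.trans hc) (lt_irrefl v)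
      obtain ⟨h2', e2⟩ | ⟨hc, e2⟩ := hb2
      swap; · exact absurd ((h1.trans hxy).trans hc) (lt_irrefl v)
      rw [if_pos h1]
      refine ⟨⟨h1, hxy⟩, ?_⟩
      rintro ⟨-, -, (⟨f1, f2, f3⟩ | ⟨f1, f2, f3⟩)⟩ <;> simp only at f1 f2 f3 <;> omega
    · obtain ⟨hc, e1⟩ | ⟨hxv, e1⟩ := hb1
      · exact absurd hc h1
      by_cases h2 : v < y
      · obtain ⟨h2', e2⟩ | ⟨hc, e2⟩ := hb2
        swap; · exact absurd (h2.trans hc) (lt_irrefl v)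
        rw [if_neg h1, if_pos h2]
        refine ⟨⟨hxv, h2⟩, ?_⟩
        rintro ⟨-, -, (⟨f1, f2, f3⟩ | ⟨f1, f2, f3⟩)⟩ <;> simp only at f1 f2 f3 <;> omega
      · obtain ⟨hc, e2⟩ | ⟨hyv, e2⟩ := hb2
        · exact absurd hc h2
        rw [if_neg h1, if_neg h2]
        refine ⟨⟨hxy, hyv⟩, ?_⟩
        rintro ⟨-, -, (⟨f1, f2, f3⟩ | ⟨f1, f2, f3⟩)⟩ <;> simp only at f1 f2 f3 <;> omega
  · -- left inverse
    rintro ⟨i, j, l⟩ hp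
    rw [Finset.mem_sdiff, mem_TT_iff, mem_Cyc_iff] at hp
    obtain ⟨⟨hij, hjl⟩, hnc⟩ := hp
    simp only at hij hjl ⊢
    by_cases c1 : a.1 i j = 1 ∧ a.1 i l = 1
    · rw [if_pos c1, if_pos hij]
    · by_cases c2 : a.1 i j = 0 ∧ a.1 j l = 1
      · rw [if_neg c1, if_pos c2]
        have hji : ¬ j < i := asymm hij
        rw [if_neg hji, if_pos hjl]
      · rw [if_neg c1, if_neg c2]
        have hli : ¬ l < i := asymm (hij.trans hjl)
        have hlj : ¬ l < j := asymm hjl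
        rw [if_neg hli, if_neg hlj]
  · -- right inverse
    rintro ⟨v, x, y⟩ hq
    rw [mem_PP_iff] at hq
    obtain ⟨hxy, hb1, hb2⟩ := hq
    simp only at hxy hb1 hb2 ⊢
    by_cases h1 : v < x
    · obtain ⟨h1', e1⟩ | ⟨hc, e1⟩ := hb1
      swap; · exact absurd (h1.trans hc) (lt_irrefl v)
      obtain ⟨h2', e2⟩ | ⟨hc, e2⟩ := hb2
      swap; · exact absurd ((h1.trans hxy).trans hc) (lt_irrefl v)
      rw [if_pos h1, if_pos ⟨e1, e2⟩]
    · obtain ⟨hc, e1⟩ | ⟨hxv, e1⟩ := hb1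
      · exact absurd hc h1
      by_cases h2 : v < y
      · obtain ⟨h2', e2⟩ | ⟨hc, e2⟩ := hb2
        swap; · exact absurd (h2.trans hc) (lt_irrefl v)
        rw [if_neg h1, if_pos h2]
        have hc1 : ¬ (a.1 x v = 1 ∧ a.1 x y = 1) := by rintro ⟨h, -⟩; omega
        rw [if_neg hc1, if_pos ⟨e1, e2⟩]
      · obtain ⟨hc, e2⟩ | ⟨hyv, e2⟩ := hb2
        · exact absurd hc h2
        rw [if_neg h1, if_neg h2]
        have hc1 : ¬ (a.1 x y = 1 ∧ a.1 x v = 1) := by rintro ⟨-, h⟩; omega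
        have hc2 : ¬ (a.1 x y = 0 ∧ a.1 y v = 1) := by rintro ⟨-, h⟩; omega
        rw [if_neg hc1, if_neg hc2]

lemma card_split (a : UT n) : (TT (n := n)).card = (Cyc a).card + (PP a).card := by
  have hsub : Cyc a ⊆ TT := by
    intro p hp
    rw [mem_Cyc_iff] at hp
    rw [mem_TT_iff]
    exact ⟨hp.1, hp.2.1⟩
  rw [← card_TT_sdiff a, ← Finset.card_sdiff_add_card_eq_card hsub, add_comm]

/-- the set of vertices beaten by `v` -/
def SS (a : UT n) (v : Fin (n+1)) : Finset (Fin (n+1)) :=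
  Finset.univ.filter (Beats a v)

lemma fiber_card (a : UT n) (v : Fin (n+1)) :
    ((PP a).filter (fun q => q.1 = v)).card =
      ((SS a v).offDiag.filter (fun p => p.1 < p.2)).card := by
  classical
  apply Finset.card_nbij' (i := fun q => (q.2.1, q.2.2)) (j := fun p => (v, p.1, p.2))
  · rintro ⟨v', x, y⟩ hq
    rw [Finset.mem_coe, Finset.mem_filter, mem_PP_iff] at hq
    obtain ⟨⟨hxy, hb1, hb2⟩, hv⟩ := hq
    simp only at hxy hb1 hb2 hv
    subst hv
    rw [Finset.mem_coe, Finset.mem_filter, Finset.mem_offDiag]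
    exact ⟨⟨by simp [SS, hb1], by simp [SS, hb2], ne_of_lt hxy⟩, hxy⟩
  · rintro ⟨x, y⟩ hp
    rw [Finset.mem_coe, Finset.mem_filter, Finset.mem_offDiag] at hp
    obtain ⟨⟨hx, hy, -⟩, hxy⟩ := hp
    simp only at hxy hx hy
    rw [SS, Finset.mem_filter] at hx hy
    rw [Finset.mem_coe, Finset.mem_filter, mem_PP_iff]
    exact ⟨⟨hxy, hx.2, hy.2⟩, rfl⟩
  · rintro ⟨v', x, y⟩ hq
    rw [Finset.mem_coe, Finset.mem_filter] at hq
    have hv : v' = v := hq.2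
    subst hv
    rfl
  · rintro ⟨x, y⟩ -
    rfl

lemma two_mul_filter_lt (S : Finset (Fin (n+1))) :
    2 * (S.offDiag.filter (fun p => p.1 < p.2)).card = S.card * S.card - S.card := by
  classical
  rw [← Finset.offDiag_card, two_mul]
  conv_rhs => rw [← Finset.card_filter_add_card_filter_not
    (p := fun p : Fin (n+1) × Fin (n+1) => p.1 < p.2)]
  congr 1
  apply Finset.card_nbij' (i := fun p => (p.2, p.1)) (j := fun p => (p.2, p.1))
  · rintro ⟨x, y⟩ hp
    rw [Finset.mem_coe, Finset.mem_filter, Finset.mem_offDiag] at hp ⊢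
    obtain ⟨⟨hx, hy, hne⟩, hlt⟩ := hp
    exact ⟨⟨hy, hx, (Ne.symm hne)⟩, asymm hlt⟩
  · rintro ⟨x, y⟩ hp
    rw [Finset.mem_coe, Finset.mem_filter, Finset.mem_offDiag] at hp ⊢
    obtain ⟨⟨hx, hy, hne⟩, hlt⟩ := hp
    simp only at hx hy hne hlt
    exact ⟨⟨hy, hx, Ne.symm hne⟩, lt_of_le_of_ne (not_lt.1 hlt) (Ne.symm hne)⟩
  · rintro ⟨x, y⟩ -; rfl
  · rintro ⟨x, y⟩ -; rfl

lemma two_mul_card_PP (a : UT n) :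
    2 * (PP a).card = ∑ v : Fin (n+1), (odeg a v * odeg a v - odeg a v) := by
  classical
  rw [Finset.card_eq_sum_card_fiberwise (f := fun q => q.1) (t := Finset.univ)
    (fun x _ => Finset.mem_univ _), Finset.mul_sum]
  apply Finset.sum_congr rfl
  intro v _
  have h1 : {q ∈ PP a | q.1 = v} = (PP a).filter (fun q => q.1 = v) := rfl
  rw [h1, fiber_card a v, two_mul_filter_lt (SS a v)]
  rfl

/-- the all-zeroes array -/
def zUT : UT n := ⟨fun _ _ => 0, fun _ _ => ⟨fun _ => Or.inl rfl, fun _ => rfl⟩⟩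

lemma Cyc_zUT : Cyc (zUT (n := n)) = ∅ := by
  ext p
  rw [mem_Cyc_iff]
  simp only [Finset.notMem_empty, iff_false]
  rintro ⟨-, -, (⟨h, -⟩ | ⟨-, -, h⟩)⟩ <;> exact absurd h (by norm_num [zUT])

lemma odeg_zUT (v : Fin (n+1)) : odeg (zUT (n := n)) v = v := by
  unfold odeg
  have h : Finset.univ.filter (Beats (zUT (n := n)) v) = Finset.Iio v := by
    ext k
    rw [Finset.mem_filter]
    simp only [Finset.mem_filter, Finset.mem_univ, true_and, Finset.mem_Iio, Beats, zUT]
    norm_num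
  rw [h, Fin.card_Iio]

lemma two_mul_card_TT : 2 * (TT (n := n)).card = ∑ v : Fin (n+1), ((v : ℕ) * v - v) := by
  have h := card_split (zUT (n := n))
  rw [Cyc_zUT, Finset.card_empty, zero_add] at h
  rw [h, two_mul_card_PP]
  exact Finset.sum_congr rfl fun v _ => by rw [odeg_zUT]

lemma cast_dd (d : ℕ) : ((d * d - d : ℕ) : ℤ) = (d : ℤ) * ((d : ℤ) - 1) := by
  have hle : d ≤ d * d := by
    rcases Nat.eq_zero_or_pos d with h | h
    · simp [h]
    · exact Nat.le_mul_of_pos_left _ h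
  rw [Nat.cast_sub hle]
  push_cast
  ring

/-- The master formula: twice the number of cyclic triples. -/
lemma master (a : UT n) : 2 * ((Cyc a).card : ℤ) =
    (∑ v : Fin (n+1), (v : ℤ) * ((v : ℤ) - 1)) -
      ∑ v : Fin (n+1), UTweight a v * (UTweight a v - 1) := by
  have h1 := card_split a
  have h2 := two_mul_card_PP a
  have h3 := two_mul_card_TT (n := n)
  have c2 : 2 * ((PP a).card : ℤ) = ∑ v : Fin (n+1), UTweight a v * (UTweight a v - 1) := by
    rw [show ((2:ℤ) * (PP a).card) = ((2 * (PP a).card : ℕ) : ℤ) by push_cast; ring, h2]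
    rw [Nat.cast_sum]
    apply Finset.sum_congr rfl
    intro v _
    rw [cast_dd, weight_eq]
  have c3 : 2 * ((TT (n := n)).card : ℤ) = ∑ v : Fin (n+1), (v : ℤ) * ((v : ℤ) - 1) := by
    rw [show ((2:ℤ) * (TT (n := n)).card) = ((2 * (TT (n := n)).card : ℕ) : ℤ) by push_cast; ring,
      h3, Nat.cast_sum]
    apply Finset.sum_congr rfl
    intro v _
    exact cast_dd v
  have c1 : ((TT (n := n)).card : ℤ) = (Cyc a).card + (PP a).card := by
    rw [h1]; push_cast; ring
  linarith

lemma gauss (a : ℤ) : ∀ b : ℤ, a - 1 ≤ b →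
    2 * (∑ t ∈ Finset.Icc a b, t) = b * (b + 1) - a * (a - 1) := by
  refine Int.le_induction ?_ ?_
  · rw [Finset.Icc_eq_empty (by omega)]
    simp
    ring
  · intro b hb ih
    have hIcc : Finset.Icc a (b + 1) = insert (b + 1) (Finset.Icc a b) := by
      ext x
      simp only [Finset.mem_Icc, Finset.mem_insert]
      omega
    have hnm : b + 1 ∉ Finset.Icc a b := by
      simp only [Finset.mem_Icc]
      omega
    rw [hIcc, Finset.sum_insert hnm, mul_add, ih]
    ring

lemma two_mul_mval (α : Fin (n+1) → ℤ) (k : Fin (n+1)) :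
    2 * (mval α k + (if α k < (k : ℤ) then (k : ℤ) - α k else 0)) =
      (k : ℤ) * ((k : ℤ) - 1) - α k * (α k - 1) + 2 * ((k : ℤ) - α k) := by
  unfold mval
  by_cases h1 : α k < (k : ℤ)
  · simp only [h1, if_true]
    have g := gauss (α k) ((k : ℤ) - 1) (by omega)
    linarith
  · by_cases h2 : (k : ℤ) < α k
    · simp only [h1, if_false, h2, if_true]
      have g := gauss ((k : ℤ) + 1) (α k) (by omega)
      linarith
    · have he : α k = (k : ℤ) := le_antisymm (not_lt.1 h2) (not_lt.1 h1)
      simp only [h1, if_false, h2]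
      rw [he]
      ring

end DegAux

/-- Degree comparison between adjacent weights, and the closed degree formula: if
`α, α' ∈ ω_n` where `α'` raises `α s` and lowers `α t`, every array of weight `α'` has
`α t - α s - 1` more neighbors than every array of weight `α`; and for a monotone
`α ∈ ω_n`, every array of weight `α` has exactly
`∑ₖ m_k + ∑_{α k < k} (k - α k)` neighbors. -/
theorem degree_of_weight_subgraph (n : ℕ) (hn : 1 ≤ n) (α : Fin (n + 1) → ℤ) :
    (∀ s t : Fin (n + 1), s < t → InOmega α →
      InOmega (Function.update (Function.update α s (α s + 1)) t (α t - 1)) →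
      ∀ a b : UT n,
        UTweight a = Function.update (Function.update α s (α s + 1)) t (α t - 1) →
        UTweight b = α →
        (Nat.card {c : UT n // UTAdj a c} : ℤ) -
          (Nat.card {c : UT n // UTAdj b c} : ℤ) = α t - α s - 1) ∧
    (InOmega α → Monotone α →
      ∀ a : UT n, UTweight a = α →
        (Nat.card {c : UT n // UTAdj a c} : ℤ) =
          (∑ k : Fin (n + 1), mval α k) +
            ∑ k : Fin (n + 1), if α k < (k : ℤ) then (k : ℤ) - α k else 0) := by

  classical
  constructor
  · intro s t hst hΩ hΩ' a b ha hb
    set α' := Function.update (Function.update α s (α s + 1)) t (α t - 1) with hα'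
    have hs_ne_t : s ≠ t := ne_of_lt hst
    have Ma := DegAux.master a
    have Mb := DegAux.master b
    rw [ha] at Ma
    rw [hb] at Mb
    rw [DegAux.card_neighbors a, DegAux.card_neighbors b]
    -- pointwise description of the updated summand
    have hpt : ∀ v : Fin (n+1), α' v * (α' v - 1) =
        Function.update (Function.update (fun v => α v * (α v - 1)) s
          ((α s + 1) * (α s + 1 - 1))) t ((α t - 1) * (α t - 1 - 1)) v := by
      intro v
      simp only [hα', Function.update_apply]
      split_ifs <;> ring
    have e2 : ∑ v : Fin (n+1), α' v * (α' v - 1) =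
        ((α t - 1) * (α t - 1 - 1)) + (((α s + 1) * (α s + 1 - 1)) +
          ∑ v ∈ (Finset.univ \ {t}) \ {s}, α v * (α v - 1)) := by
      rw [Finset.sum_congr rfl (fun v _ => hpt v),
        Finset.sum_update_of_mem (Finset.mem_univ t),
        Finset.sum_update_of_mem (show s ∈ Finset.univ \ {t} by
          simp [Finset.mem_sdiff, hs_ne_t])]
    have e1 : ∑ v : Fin (n+1), α v * (α v - 1) =
        ((∑ v ∈ (Finset.univ \ {t}) \ {s}, α v * (α v - 1)) + α s * (α s - 1))
          + α t * (α t - 1) := by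
      rw [Finset.sum_eq_sum_sdiff_singleton_add (Finset.mem_univ t) (fun v => α v * (α v - 1)),
        Finset.sum_eq_sum_sdiff_singleton_add (show s ∈ Finset.univ \ {t} by
          simp [Finset.mem_sdiff, hs_ne_t]) (fun v => α v * (α v - 1))]
    linarith
  · intro hΩ _ a ha
    have M := DegAux.master a
    rw [ha] at M
    rw [DegAux.card_neighbors a]
    have hsum := hΩ.1
    have e : ∑ k : Fin (n+1), 2 * (mval α k + (if α k < (k : ℤ) then (k : ℤ) - α k else 0)) =
        ∑ k : Fin (n+1), ((k : ℤ) * ((k : ℤ) - 1) - α k * (α k - 1) + 2 * ((k : ℤ) - α k)) :=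
      Finset.sum_congr rfl fun k _ => DegAux.two_mul_mval α k
    have lhs : ∑ k : Fin (n+1), 2 * (mval α k + (if α k < (k : ℤ) then (k : ℤ) - α k else 0)) =
        2 * ((∑ k : Fin (n+1), mval α k) +
          ∑ k : Fin (n+1), if α k < (k : ℤ) then (k : ℤ) - α k else 0) := by
      rw [← Finset.mul_sum, Finset.sum_add_distrib]
    have rhs : ∑ k : Fin (n+1), ((k : ℤ) * ((k : ℤ) - 1) - α k * (α k - 1) + 2 * ((k : ℤ) - α k)) =
        (∑ k : Fin (n+1), (k : ℤ) * ((k : ℤ) - 1)) - (∑ k : Fin (n+1), α k * (α k - 1))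
          + 2 * ((∑ k : Fin (n+1), (k : ℤ)) - ∑ k : Fin (n+1), α k) := by
      rw [Finset.sum_add_distrib, Finset.sum_sub_distrib, ← Finset.mul_sum,
        Finset.sum_sub_distrib]
    linarith
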